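/- For all real s ≥ 1, the modified Bessel function of the first kind satisfies I_1(s) ≤ √(2/(π s)) · e^s. -/

import Mathlib

open Real

/-- The modified Bessel function of the first kind of order 1. -/
noncomputable def besselI1 (s : ℝ) : ℝ :=
  ∑' m : ℕ, (s / 2) ^ (2 * m + 1) / ((Nat.factorial m : ℝ) * (Nat.factorial (m + 1) : ℝ))

lemma cb_sq (n : ℕ) : ((Nat.centralBinom n : ℝ)) ^ 2 * (3 * n + 1) ≤ 16 ^ n := by
  induction n with
  | zero => simp [Nat.centralBinom]
  | succ n ih =>
    have key : ((n : ℝ) + 1) * (Nat.centralBinom (n + 1) : ℝ)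
        = 2 * (2 * n + 1) * (Nat.centralBinom n : ℝ) := by
      exact_mod_cast congrArg (Nat.cast : ℕ → ℝ) (Nat.succ_mul_centralBinom_succ n)
    have h1 : (((n : ℝ) + 1) * (Nat.centralBinom (n + 1) : ℝ)) ^ 2
        = (2 * (2 * n + 1) * (Nat.centralBinom n : ℝ)) ^ 2 := by rw [key]
    have hn1 : (0:ℝ) < ((n:ℝ) + 1) ^ 2 * (3 * n + 1) := by positivity
    have hpoly : (2 * (n:ℝ) + 1) ^ 2 * (3 * n + 4) ≤ 4 * ((n:ℝ) + 1) ^ 2 * (3 * n + 1) := by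
      nlinarith [Nat.cast_nonneg (α := ℝ) n]
    have h16 : (0:ℝ) < 16 ^ n := by positivity
    rw [← mul_le_mul_iff_of_pos_right hn1]
    push_cast
    calc (Nat.centralBinom (n + 1) : ℝ) ^ 2 * (3 * (n + 1) + 1) * (((n:ℝ) + 1) ^ 2 * (3 * n + 1))
        = (2 * (2 * n + 1) * (Nat.centralBinom n : ℝ)) ^ 2 * ((3 * n + 4) * (3 * n + 1)) := by
          nlinarith [h1]
      _ = (2 * (2 * n + 1)) ^ 2 * (3 * n + 4) * ((Nat.centralBinom n : ℝ) ^ 2 * (3 * n + 1)) := by ring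
      _ ≤ (2 * (2 * n + 1)) ^ 2 * (3 * n + 4) * 16 ^ n := by
          have : (0:ℝ) ≤ (2 * (2 * (n:ℝ) + 1)) ^ 2 * (3 * n + 4) := by positivity
          exact mul_le_mul_of_nonneg_left ih this
      _ ≤ 16 * ((n:ℝ) + 1) ^ 2 * (3 * n + 1) * 16 ^ n := by nlinarith [hpoly, h16]
      _ = 16 ^ (n + 1) * (((n:ℝ) + 1) ^ 2 * (3 * n + 1)) := by ring

lemma cb_sqrt (n : ℕ) : (Nat.centralBinom n : ℝ) * Real.sqrt n ≤ 4 ^ n := by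
  have h := cb_sq n
  have h2 : ((Nat.centralBinom n : ℝ)) ^ 2 * n ≤ (4 ^ n) ^ 2 := by
    have : ((Nat.centralBinom n : ℝ)) ^ 2 * n ≤ ((Nat.centralBinom n : ℝ)) ^ 2 * (3 * n + 1) := by
      nlinarith [sq_nonneg ((Nat.centralBinom n : ℝ)), Nat.cast_nonneg (α := ℝ) n]
    calc ((Nat.centralBinom n : ℝ)) ^ 2 * n ≤ _ := this
      _ ≤ 16 ^ n := h
      _ = (4 ^ n) ^ 2 := by rw [← pow_mul, mul_comm, pow_mul]; norm_num
  nlinarith [Real.sq_sqrt (Nat.cast_nonneg (α := ℝ) n), Real.sqrt_nonneg (n : ℝ),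
    pow_nonneg (by norm_num : (0:ℝ) ≤ 4) n, mul_nonneg (Nat.cast_nonneg (α := ℝ) (Nat.centralBinom n)) (Real.sqrt_nonneg (n:ℝ)),
    sq_nonneg ((Nat.centralBinom n : ℝ) * Real.sqrt n - 4 ^ n)]

lemma term_le (s : ℝ) (hs : 1 ≤ s) (m : ℕ) :
    (s / 2) ^ (2 * m + 1) / ((Nat.factorial m : ℝ) * (Nat.factorial (m + 1) : ℝ)) ≤
      Real.sqrt (2 / (π * s)) *
        (s ^ (2 * m + 1) / (Nat.factorial (2 * m + 1) : ℝ)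
          + s ^ (2 * m + 2) / (Nat.factorial (2 * m + 2) : ℝ)) := by
  have hs0 : (0:ℝ) < s := lt_of_lt_of_le one_pos hs
  set c : ℝ := Real.sqrt (2 / (π * s)) with hc
  have hc0 : 0 ≤ c := Real.sqrt_nonneg _
  set t : ℝ := (m : ℝ) + 1 with ht
  have ht0 : (0:ℝ) < t := by positivity
  -- AM-GM
  have amgm : 2 * Real.sqrt (2 * t * s) ≤ 2 * t + s := by
    have h1 : Real.sqrt (2 * t * s) = Real.sqrt (2 * t) * Real.sqrt s :=
      Real.sqrt_mul (by positivity) s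
    nlinarith [sq_nonneg (Real.sqrt (2 * t) - Real.sqrt s),
      Real.sq_sqrt (by positivity : (0:ℝ) ≤ 2 * t), Real.sq_sqrt hs0.le]
  -- c * sqrt(2 t s) ≥ sqrt t
  have hcs : Real.sqrt t ≤ c * Real.sqrt (2 * t * s) := by
    have h1 : c * Real.sqrt (2 * t * s) = Real.sqrt (2 / (π * s) * (2 * t * s)) :=
      (Real.sqrt_mul (by positivity) _).symm
    have h2 : 2 / (π * s) * (2 * t * s) = 4 * t / π := by
      field_simp
      ring
    rw [h1, h2]
    apply Real.sqrt_le_sqrt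
    rw [le_div_iff₀ Real.pi_pos]
    nlinarith [Real.pi_le_four, ht0]
  -- step B
  have stepB : 2 * Real.sqrt t ≤ c * (2 * t + s) := by
    calc 2 * Real.sqrt t ≤ 2 * (c * Real.sqrt (2 * t * s)) := by linarith
      _ = c * (2 * Real.sqrt (2 * t * s)) := by ring
      _ ≤ c * (2 * t + s) := mul_le_mul_of_nonneg_left amgm hc0
  -- binomial bound
  have hB : (Nat.centralBinom (m + 1) : ℝ) * t ≤ 4 ^ (m + 1) * Real.sqrt t := by
    have h1 := cb_sqrt (m + 1)
    have h2 : Real.sqrt t * Real.sqrt t = t := Real.mul_self_sqrt ht0.le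
    have h3 : ((m + 1 : ℕ) : ℝ) = t := by push_cast [ht]; ring
    rw [h3] at h1
    calc (Nat.centralBinom (m + 1) : ℝ) * t
        = (Nat.centralBinom (m + 1) : ℝ) * Real.sqrt t * Real.sqrt t := by rw [mul_assoc, h2]
      _ ≤ 4 ^ (m + 1) * Real.sqrt t :=
          mul_le_mul_of_nonneg_right h1 (Real.sqrt_nonneg t)
  -- key
  have key : (Nat.centralBinom (m + 1) : ℝ) * t ≤ c * (2 * t + s) * 2 ^ (2 * m + 1) := by
    have h4 : (4:ℝ) ^ (m + 1) = 2 * 2 ^ (2 * m + 1) := by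
      rw [show (4:ℝ) = 2 ^ 2 by norm_num, ← pow_mul]
      rw [show 2 * (m + 1) = (2 * m + 1) + 1 by ring, pow_succ]
      ring
    calc (Nat.centralBinom (m + 1) : ℝ) * t ≤ 4 ^ (m + 1) * Real.sqrt t := hB
      _ = 2 ^ (2 * m + 1) * (2 * Real.sqrt t) := by rw [h4]; ring
      _ ≤ 2 ^ (2 * m + 1) * (c * (2 * t + s)) := by
          apply mul_le_mul_of_nonneg_left stepB (by positivity)
      _ = c * (2 * t + s) * 2 ^ (2 * m + 1) := by ring
  -- factorial facts
  have F1 : ((Nat.factorial (2 * m + 2) : ℝ))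
      = (Nat.centralBinom (m + 1) : ℝ) * (Nat.factorial (m + 1) : ℝ) * (Nat.factorial (m + 1) : ℝ) := by
    have := Nat.choose_mul_factorial_mul_factorial (show m + 1 ≤ 2 * (m + 1) by omega)
    have h' : Nat.centralBinom (m + 1) * Nat.factorial (m + 1) * Nat.factorial (m + 1)
        = Nat.factorial (2 * m + 2) := by
      rw [Nat.centralBinom, show 2 * m + 2 = 2 * (m + 1) by ring]
      rw [show 2 * (m + 1) - (m + 1) = m + 1 by omega] at this
      exact this
    exact_mod_cast h'.symm
  have F2 : ((Nat.factorial (m + 1) : ℝ)) = t * (Nat.factorial m : ℝ) := by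
    rw [Nat.factorial_succ]; push_cast [ht]; ring
  have F3 : ((Nat.factorial (2 * m + 2) : ℝ)) = (2 * t) * (Nat.factorial (2 * m + 1) : ℝ) := by
    rw [show 2 * m + 2 = (2 * m + 1) + 1 by ring, Nat.factorial_succ]; push_cast [ht]; ring
  -- rewrite RHS
  have hfac1 : (0:ℝ) < (Nat.factorial (2 * m + 1) : ℝ) := by positivity
  have hfac2 : (0:ℝ) < (Nat.factorial (2 * m + 2) : ℝ) := by positivity
  have hfacm : (0:ℝ) < (Nat.factorial m : ℝ) := by positivity
  have hfacm1 : (0:ℝ) < (Nat.factorial (m + 1) : ℝ) := by positivity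
  have hR : c * (s ^ (2 * m + 1) / (Nat.factorial (2 * m + 1) : ℝ)
        + s ^ (2 * m + 2) / (Nat.factorial (2 * m + 2) : ℝ))
      = c * s ^ (2 * m + 1) * (2 * t + s) / (Nat.factorial (2 * m + 2) : ℝ) := by
    rw [F3, show 2 * m + 2 = (2 * m + 1) + 1 by ring, pow_succ]
    field_simp
    ring
  rw [hR, div_pow, div_div]
  rw [div_le_div_iff₀ (by positivity) (by positivity)]
  calc s ^ (2 * m + 1) * (Nat.factorial (2 * m + 2) : ℝ)
      = ((Nat.centralBinom (m + 1) : ℝ) * t) * (s ^ (2 * m + 1) * (Nat.factorial m : ℝ) * (Nat.factorial (m + 1) : ℝ)) := by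
        rw [F1]; nth_rewrite 1 [F2]; ring
    _ ≤ (c * (2 * t + s) * 2 ^ (2 * m + 1)) * (s ^ (2 * m + 1) * (Nat.factorial m : ℝ) * (Nat.factorial (m + 1) : ℝ)) := by
        apply mul_le_mul_of_nonneg_right key (by positivity)
    _ = c * s ^ (2 * m + 1) * (2 * t + s) * (2 ^ (2 * m + 1) * ((Nat.factorial m : ℝ) * (Nat.factorial (m + 1) : ℝ))) := by ring

theorem besselI1_upper' (s : ℝ) (hs : 1 ≤ s) :
    (∑' m : ℕ, (s / 2) ^ (2 * m + 1) / ((Nat.factorial m : ℝ) * (Nat.factorial (m + 1) : ℝ)))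
      ≤ Real.sqrt (2 / (π * s)) * Real.exp s := by
  have hs0 : (0:ℝ) < s := lt_of_lt_of_le one_pos hs
  set c : ℝ := Real.sqrt (2 / (π * s)) with hc
  have hc0 : 0 ≤ c := Real.sqrt_nonneg _
  have hu : Summable (fun n : ℕ => s ^ n / (Nat.factorial n : ℝ)) :=
    Real.summable_pow_div_factorial s
  have hodd : Summable (fun m : ℕ => s ^ (2 * m + 1) / (Nat.factorial (2 * m + 1) : ℝ)) :=
    hu.comp_injective (i := fun m => 2 * m + 1) (fun a b h => by simp only at h; omega)
  have heven : Summable (fun m : ℕ => s ^ (2 * m + 2) / (Nat.factorial (2 * m + 2) : ℝ)) :=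
    hu.comp_injective (i := fun m => 2 * m + 2) (fun a b h => by simp only at h; omega)
  have hg : Summable (fun m : ℕ => c * (s ^ (2 * m + 1) / (Nat.factorial (2 * m + 1) : ℝ)
      + s ^ (2 * m + 2) / (Nat.factorial (2 * m + 2) : ℝ))) :=
    (hodd.add heven).mul_left c
  have hf : Summable (fun m : ℕ =>
      (s / 2) ^ (2 * m + 1) / ((Nat.factorial m : ℝ) * (Nat.factorial (m + 1) : ℝ))) := by
    have hbound : ∀ m : ℕ,
        (s / 2) ^ (2 * m + 1) / ((Nat.factorial m : ℝ) * (Nat.factorial (m + 1) : ℝ))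
          ≤ (s / 2) * ((s ^ 2 / 4) ^ m / (Nat.factorial m : ℝ)) := by
      intro m
      have h1 : (s / 2) ^ (2 * m + 1) = (s / 2) * (s ^ 2 / 4) ^ m := by
        rw [show 2 * m + 1 = 1 + 2 * m by ring, pow_add, pow_mul]
        ring_nf
      rw [h1, mul_div_assoc]
      have hfm : (0:ℝ) < (Nat.factorial m : ℝ) := by positivity
      have hfm1 : (1:ℝ) ≤ (Nat.factorial (m + 1) : ℝ) := by
        exact_mod_cast Nat.one_le_iff_ne_zero.mpr (Nat.factorial_ne_zero (m+1))
      gcongr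
      nlinarith
    exact Summable.of_nonneg_of_le (fun m => by positivity) hbound
      ((Real.summable_pow_div_factorial (s ^ 2 / 4)).mul_left (s / 2))
  have step1 := Summable.tsum_le_tsum (term_le s hs) hf hg
  have hexp : Real.exp s = ∑' n : ℕ, s ^ n / (Nat.factorial n : ℝ) := by
    rw [Real.exp_eq_exp_ℝ, NormedSpace.exp_eq_tsum_div]
  have step2 : (∑' m : ℕ, c * (s ^ (2 * m + 1) / (Nat.factorial (2 * m + 1) : ℝ)
      + s ^ (2 * m + 2) / (Nat.factorial (2 * m + 2) : ℝ))) ≤ c * Real.exp s := by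
    rw [tsum_mul_left]
    apply mul_le_mul_of_nonneg_left _ hc0
    rw [Summable.tsum_add hodd heven]
    have hshift : Summable (fun n : ℕ => s ^ (n + 1) / (Nat.factorial (n + 1) : ℝ)) :=
      hu.comp_injective (i := fun n => n + 1) (fun a b h => by simp only at h; omega)
    have heao := tsum_even_add_odd (f := fun n : ℕ => s ^ (n + 1) / (Nat.factorial (n + 1) : ℝ))
      (hshift.comp_injective (i := fun m => 2 * m) (fun a b h => by simp only at h; omega))
      (hshift.comp_injective (i := fun m => 2 * m + 1) (fun a b h => by simp only at h; omega))
    have e1 : (∑' m : ℕ, s ^ (2 * m + 1) / (Nat.factorial (2 * m + 1) : ℝ))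
        + (∑' m : ℕ, s ^ (2 * m + 2) / (Nat.factorial (2 * m + 2) : ℝ))
        = ∑' n : ℕ, s ^ (n + 1) / (Nat.factorial (n + 1) : ℝ) := by
      convert heao using 3 <;> ring_nf
    rw [e1]
    have e2 := Summable.tsum_eq_zero_add hu
    rw [hexp]
    rw [e2]
    simp [Nat.factorial]
  calc _ ≤ _ := step1
    _ ≤ c * Real.exp s := step2

theorem besselI1_upper (s : ℝ) (hs : 1 ≤ s) :
    besselI1 s ≤ Real.sqrt (2 / (π * s)) * Real.exp s := besselI1_upper' s hs
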